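/- Let k be a field, B = k[x]_(x), K = k(x), C = K[y]_(y) with C → K reduction mod y, and A = B ×_K C. Let I = yC = Ker(A → B) be the conductor. Then I is not finitely generated as an ideal of A. -/

import Mathlib

open Polynomial

/-- The canonical map from `B = k[x]_(x)` to its fraction field `K = k(x)`. -/
noncomputable def dvrToFracField (k : Type*) [Field k]
    [hp : (Ideal.span {(X : k[X])}).IsPrime] :
    Localization.AtPrime (Ideal.span {(X : k[X])}) →+* RatFunc k :=
  IsLocalization.map (M := (Ideal.span {(X : k[X])}).primeCompl)
    (T := nonZeroDivisors k[X]) (RatFunc k) (RingHom.id k[X])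
    (by
      intro x hx
      exact mem_nonZeroDivisors_of_ne_zero (fun h => hx (h ▸ Ideal.zero_mem _)))

/-- The residue map `C = K[y]_(y) → K`, reduction modulo `y`. -/
noncomputable def resModY (k : Type*) [Field k]
    [hq : (Ideal.span {(X : (RatFunc k)[X])}).IsPrime] :
    Localization.AtPrime (Ideal.span {(X : (RatFunc k)[X])}) →+* RatFunc k :=
  IsLocalization.lift (M := (Ideal.span {(X : (RatFunc k)[X])}).primeCompl)
    (g := Polynomial.evalRingHom (0 : RatFunc k))
    (fun y => isUnit_iff_ne_zero.mpr fun h => y.2 (Ideal.mem_span_singleton.mpr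
      (Polynomial.X_dvd_iff.mpr (by rw [Polynomial.coeff_zero_eq_eval_zero]; simpa using h))))

/-- `A = B ×_K C`, realized as the preimage of `B` under `C → K`. -/
noncomputable def compositionRing (k : Type*) [Field k]
    [hp : (Ideal.span {(X : k[X])}).IsPrime]
    [hq : (Ideal.span {(X : (RatFunc k)[X])}).IsPrime] :
    Subring (Localization.AtPrime (Ideal.span {(X : (RatFunc k)[X])})) :=
  Subring.comap (resModY k) (dvrToFracField k).range

section Helpers
variable (k : Type*) [Field k]
  [hp : (Ideal.span {(X : k[X])}).IsPrime]
  [hq : (Ideal.span {(X : (RatFunc k)[X])}).IsPrime]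

-- B' membership, reverse direction
lemma mem_range_dvr (p q : k[X]) (hq0 : q.eval 0 ≠ 0) :
    algebraMap k[X] (RatFunc k) p / algebraMap k[X] (RatFunc k) q ∈ (dvrToFracField k).range := by
  have hqc : q ∈ (Ideal.span {(X : k[X])}).primeCompl := by
    intro hmem
    exact hq0 (by
      have := Ideal.mem_span_singleton.mp hmem
      have := Polynomial.X_dvd_iff.mp this
      rwa [Polynomial.coeff_zero_eq_eval_zero] at this)
  refine ⟨IsLocalization.mk' _ p (⟨q, hqc⟩ : (Ideal.span {(X : k[X])}).primeCompl), ?_⟩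
  rw [dvrToFracField]; erw [IsLocalization.map_mk']
  simp only [RingHom.id_apply]
  exact IsFractionRing.mk'_eq_div _

set_option linter.unusedSectionVars false

-- forward direction: every element of B' is p/q with q(0) ≠ 0
lemma range_dvr_subset (b : RatFunc k) (hb : b ∈ (dvrToFracField k).range) :
    ∃ p q : k[X], q.eval 0 ≠ 0 ∧
      b * algebraMap k[X] (RatFunc k) q = algebraMap k[X] (RatFunc k) p := by
  obtain ⟨a, rfl⟩ := hb
  obtain ⟨p, s, rfl⟩ := IsLocalization.exists_mk'_eq
    (Ideal.span {(X : k[X])}).primeCompl a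
  refine ⟨p, s, ?_, ?_⟩
  · intro h
    exact s.2 (Ideal.mem_span_singleton.mpr (Polynomial.X_dvd_iff.mpr
      (by rwa [Polynomial.coeff_zero_eq_eval_zero])))
  · rw [dvrToFracField]; erw [IsLocalization.map_mk']
    simp only [RingHom.id_apply]
    exact IsLocalization.mk'_spec _ _ _

-- x⁻¹ ∉ B'
lemma inv_X_not_mem :
    (algebraMap k[X] (RatFunc k) X)⁻¹ ∉ (dvrToFracField k).range := by
  intro hmem
  obtain ⟨p, q, hq0, heq⟩ := range_dvr_subset k _ hmem
  have hX : algebraMap k[X] (RatFunc k) X ≠ 0 := by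
    simpa using (IsFractionRing.to_map_eq_zero_iff (K := RatFunc k)).not.mpr
      (Polynomial.X_ne_zero (R := k))
  have : algebraMap k[X] (RatFunc k) (X * p) = algebraMap k[X] (RatFunc k) q := by
    rw [map_mul, ← heq, ← mul_assoc, mul_inv_cancel₀ hX, one_mul]
  have hqp : q = X * p := (IsFractionRing.injective k[X] (RatFunc k) this).symm
  rw [hqp] at hq0
  simp at hq0

lemma exists_pow_mul_mem (f : RatFunc k) :
    ∃ m : ℕ, (algebraMap k[X] (RatFunc k) X) ^ m * f ∈ (dvrToFracField k).range := by
  by_cases hf : f = 0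
  · exact ⟨0, by rw [hf, mul_zero]; exact ⟨0, map_zero _⟩⟩
  obtain ⟨t, q, hden, hq0⟩ : ∃ (t : ℕ) (q : k[X]), f.denom = X ^ t * q ∧ q.eval 0 ≠ 0 := by
    have hdne : f.denom ≠ 0 := RatFunc.denom_ne_zero f
    refine ⟨rootMultiplicity 0 f.denom, f.denom /ₘ X ^ rootMultiplicity 0 f.denom, ?_, ?_⟩
    · have h := pow_mul_divByMonic_rootMultiplicity_eq f.denom 0
      rw [C_0, sub_zero] at h
      exact h.symm
    · have h := eval_divByMonic_pow_rootMultiplicity_ne_zero 0 hdne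
      rwa [C_0, sub_zero] at h
  refine ⟨t, ?_⟩
  have hXne : algebraMap k[X] (RatFunc k) X ≠ 0 := by
    simpa using (IsFractionRing.to_map_eq_zero_iff (K := RatFunc k)).not.mpr
      (Polynomial.X_ne_zero (R := k))
  have hqne : algebraMap k[X] (RatFunc k) q ≠ 0 :=
    (IsFractionRing.to_map_eq_zero_iff (K := RatFunc k)).not.mpr
      (fun h => hq0 (by simp [h]))
  have hkey : (algebraMap k[X] (RatFunc k) X) ^ t * f
      = algebraMap k[X] (RatFunc k) f.num / algebraMap k[X] (RatFunc k) q := by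
    conv_lhs => rw [← RatFunc.num_div_denom f, hden, map_mul, map_pow]
    rw [mul_div_assoc', mul_div_mul_left _ _ (pow_ne_zero t hXne)]
  rw [hkey]
  exact mem_range_dvr k f.num q hq0

end Helpers

/-- The conductor `I = yC = Ker(A → B)` of the composition
`A = B ×_K C` of the two discrete valuation rings `B = k[x]_(x)` and
`C = K[y]_(y)`, viewed as an ideal of `A ⊆ C`, is not finitely generated. -/
theorem composition_conductor_not_fg (k : Type*) [Field k]
    [hp : (Ideal.span {(X : k[X])}).IsPrime]
    [hq : (Ideal.span {(X : (RatFunc k)[X])}).IsPrime] :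
    ¬ (Ideal.comap (compositionRing k).subtype
        (Ideal.span {algebraMap ((RatFunc k)[X])
          (Localization.AtPrime (Ideal.span {(X : (RatFunc k)[X])})) X})).FG := by
  classical
  intro hfg
  obtain ⟨S, hS⟩ := hfg
  set K : Type _ := RatFunc k with hK
  set C : Type _ := Localization.AtPrime (Ideal.span {(X : (RatFunc k)[X])}) with hC
  set φ : C →+* K := resModY k with hφ
  set x : K := algebraMap k[X] (RatFunc k) X with hx
  set y : C := algebraMap ((RatFunc k)[X]) C X with hy
  -- basic facts
  have hφalg : ∀ p : (RatFunc k)[X], φ (algebraMap ((RatFunc k)[X]) C p) = p.eval 0 := by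
    intro p
    exact IsLocalization.lift_eq _ p
  have hinj : Function.Injective (algebraMap ((RatFunc k)[X]) C) :=
    IsLocalization.injective C (Ideal.span {(X : (RatFunc k)[X])}).primeCompl_le_nonZeroDivisors
  have hyne : y ≠ 0 := fun h => Polynomial.X_ne_zero (R := RatFunc k) (hinj (show _ = algebraMap ((RatFunc k)[X]) C 0 by rw [map_zero]; exact h))
  have hXne : x ≠ 0 := by
    exact (IsFractionRing.to_map_eq_zero_iff (K := RatFunc k)).not.mpr
      (Polynomial.X_ne_zero (R := k))
  have hxmem : x ∈ (dvrToFracField k).range := by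
    refine ⟨algebraMap k[X] _ X, ?_⟩
    rw [dvrToFracField]; erw [IsLocalization.map_eq]
    rfl
  -- each generator is divisible by y in C
  have hgex : ∀ s : (compositionRing k), ∃ g : C, s ∈ S → (s : C) = y * g := by
    intro s
    by_cases hsS : s ∈ S
    · have hsI : s ∈ Ideal.span (↑S : Set (compositionRing k)) := Ideal.subset_span hsS
      rw [hS, Ideal.mem_comap] at hsI
      obtain ⟨g, hg⟩ := Ideal.mem_span_singleton.mp hsI
      exact ⟨g, fun _ => hg⟩
    · exact ⟨0, fun h => absurd h hsS⟩
  choose g hg using hgex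
  -- bound the poles of the φ(g s)
  choose m hm using fun s : (compositionRing k) => exists_pow_mul_mem k (φ (g s))
  set M : ℕ := S.sup m with hM
  have hbd : ∀ s ∈ S, x ^ M * φ (g s) ∈ (dvrToFracField k).range := by
    intro s hs
    have : x ^ M * φ (g s) = x ^ (M - m s) * (x ^ (m s) * φ (g s)) := by
      rw [← mul_assoc, ← pow_add, Nat.sub_add_cancel (Finset.le_sup hs)]
    rw [this]
    exact Subring.mul_mem _ (Subring.pow_mem _ hxmem _) (hm s)
  -- the element x⁻¹^(M+1) * y of the conductor
  set r : K := x⁻¹ ^ (M + 1) with hr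
  set z : C := algebraMap ((RatFunc k)[X]) C (Polynomial.C r * X) with hz
  have hzA : z ∈ compositionRing k := by
    rw [compositionRing, Subring.mem_comap]
    have : φ z = 0 := by rw [hz, hφalg]; simp
    rw [this]
    exact Subring.zero_mem _
  have hzI : (⟨z, hzA⟩ : compositionRing k) ∈ Ideal.span (↑S : Set (compositionRing k)) := by
    rw [hS, Ideal.mem_comap, Ideal.mem_span_singleton]
    exact ⟨algebraMap ((RatFunc k)[X]) C (Polynomial.C r), by show z = _; rw [hz, map_mul, mul_comm]⟩
  obtain ⟨f, -, hf⟩ := Submodule.mem_span_finset.mp hzI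
  -- push the representation to C and cancel y
  have hsum : z = y * ∑ s ∈ S, (f s : C) * g s := by
    simp only [smul_eq_mul] at hf
    have h1 : (↑(∑ i ∈ S, f i * i) : C) = z := congrArg Subtype.val hf
    push_cast at h1
    calc z = ∑ s ∈ S, (f s : C) * (s : C) := h1.symm
      _ = ∑ s ∈ S, (f s : C) * (y * g s) := by
          refine Finset.sum_congr rfl fun s hs => ?_
          rw [hg s hs]
      _ = y * ∑ s ∈ S, (f s : C) * g s := by
          rw [Finset.mul_sum]; refine Finset.sum_congr rfl fun s hs => ?_; ring
  have hzy : z = y * algebraMap ((RatFunc k)[X]) C (Polynomial.C r) := by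
    rw [hz, map_mul, mul_comm]
  have hcancel : algebraMap ((RatFunc k)[X]) C (Polynomial.C r)
      = ∑ s ∈ S, (f s : C) * g s := mul_left_cancel₀ hyne (hzy ▸ hsum)
  -- apply φ
  have hrsum : r = ∑ s ∈ S, φ (f s : C) * φ (g s) := by
    have := congrArg φ hcancel
    rw [hφalg, map_sum] at this
    simpa using this
  -- multiply by x^M and get x⁻¹ ∈ B'
  have hfinal : x⁻¹ ∈ (dvrToFracField k).range := by
    have hxr : x ^ M * r = x⁻¹ := by
      rw [hr, pow_succ, ← mul_assoc, ← mul_pow, mul_inv_cancel₀ hXne, one_pow, one_mul]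
    rw [← hxr, hrsum, Finset.mul_sum]
    refine Subring.sum_mem _ fun s hs => ?_
    have : x ^ M * (φ (f s : C) * φ (g s)) = φ (f s : C) * (x ^ M * φ (g s)) := by ring
    rw [this]
    refine Subring.mul_mem _ ?_ (hbd s hs)
    exact (f s).2
  exact inv_X_not_mem k hfinal
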